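/- Let K be a field of characteristic zero, α_1,…,α_m ∈ K, l ≥ 1 an integer, μ ∈ {0,1,…,m}, and let σ_i be defined by Π_{j=1}^m (α_j − w)^l = Σ_{i=0}^{ml} σ_i w^i. Set B_{l,μ,0}(t) = Σ_{i=0}^{ml} σ_i · ((ml+μ)!/(i+μ)!) · t^{ml−i} and B_{l,μ,j}(t) = (ml+μ)! Σ_{N=0}^{ml+μ−1} t^N Σ_{h=0}^{min{ml,N}} σ_{ml−h} · ((N−h)!/(ml−h+μ)!) · α_j^{N−h}. Then as formal power series in K[[t]], for each j = 1,…,m one has B_{l,μ,0}(t)·F(α_j t) − B_{l,μ,j}(t) = S_{l,μ,j}(t), where F(t) = Σ_{n≥0} n! t^n and S_{l,μ,j}(t) = (ml+μ)!·l!·t^{(m+1)l+μ} · Σ_{k≥0} t^k · k! · C(l+k, k) · α_j^{l+μ+k} · Σ_{i=0}^{ml} σ_i · C(i+μ+l+k, i+μ) · α_j^i. -/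

import Mathlib

open Polynomial Finset Nat

lemma pade_keyA {K : Type*} [Field K] [CharZero K] {m : ℕ} (α : Fin m → K) (l μ : ℕ)
    (hl : 1 ≤ l) (j : Fin m) (s : ℕ) (hs1 : μ ≤ s) (hs2 : s < l + μ) :
    ∑ i ∈ range (m * l + 1),
      (∏ j', (C (α j') - X) ^ l).coeff i * (((s + i)! : K) / (((i + μ)! : K))) * α j ^ i
      = 0 := by
  set P := m * l with hP
  set Q : K[X] := ∏ j', (C (α j') - X) ^ l with hQ
  have hfacQ : ∀ j' : Fin m, (C (α j') - X) ^ l ≠ 0 := by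
    intro j'
    apply pow_ne_zero
    intro h
    have := congrArg (fun p => Polynomial.coeff p 1) h
    simp at this
  have hQne : Q ≠ 0 := Finset.prod_ne_zero_iff.2 fun j' _ => hfacQ j'
  have hdegQ : Q.natDegree ≤ P := by
    refine le_trans (Polynomial.natDegree_prod_le _ _) ?_
    rw [hP, mul_comm]
    refine Finset.sum_le_card_nsmul _ _ l ?_ |>.trans (by simp [mul_comm])
    intro j' _
    refine le_trans (Polynomial.natDegree_pow_le) ?_
    have h1 : (C (α j') - X).natDegree ≤ 1 := by
      have : (C (α j') - X) = -(X - C (α j')) := by ring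
      rw [this, natDegree_neg, natDegree_X_sub_C]
    calc l * (C (α j') - X).natDegree ≤ l * 1 := Nat.mul_le_mul_left l h1
      _ = l := by ring
  have hcoeffQ : ∀ i, P < i → Q.coeff i = 0 := fun i hi =>
    Polynomial.coeff_eq_zero_of_natDegree_lt (lt_of_le_of_lt hdegQ hi)
  -- R and its root
  set R : K[X] := Q * X ^ s with hR
  have hRne : R ≠ 0 := mul_ne_zero hQne (pow_ne_zero _ X_ne_zero)
  have hdvd : (X - C (α j)) ^ l ∣ R := by
    have h1 : (X - C (α j)) ^ l ∣ (C (α j) - X) ^ l :=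
      pow_dvd_pow_of_dvd ⟨-1, by ring⟩ l
    exact h1.trans ((Finset.dvd_prod_of_mem (fun j' => (C (α j') - X) ^ l)
      (Finset.mem_univ j)).trans (dvd_mul_right Q (X ^ s)))
  have hroot : (derivative^[s - μ] R).eval (α j) = 0 := by
    refine isRoot_iterate_derivative_of_lt_rootMultiplicity ?_
    have hle : l ≤ rootMultiplicity (α j) R := (le_rootMultiplicity_iff hRne).2 hdvd
    omega
  have hnd : (derivative^[s - μ] R).natDegree < s + P + 1 := by
    have h1 := Polynomial.natDegree_iterate_derivative R (s - μ)
    have h2 : R.natDegree ≤ P + s :=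
      le_trans (Polynomial.natDegree_mul_le) (by simp [natDegree_X_pow]; omega)
    omega
  have heval := Polynomial.eval_eq_sum_range' hnd (α j)
  rw [hroot] at heval
  -- rewrite coefficients
  have hcoeffD : ∀ t, (derivative^[s - μ] R).coeff t
      = ((t + (s - μ)).descFactorial (s - μ) : K) *
        (if s ≤ t + (s - μ) then Q.coeff (t + (s - μ) - s) else 0) := by
    intro t
    rw [Polynomial.coeff_iterate_derivative, hR, Polynomial.coeff_mul_X_pow', nsmul_eq_mul]
  -- turn the eval sum into the shifted sum
  have hsum0 : ∑ i ∈ range (P + 1),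
      (((i + s).descFactorial (s - μ) : K) * Q.coeff i) * α j ^ (μ + i) = 0 := by
    have hsplit : s + P + 1 = μ + (P + 1) + (s - μ) := by omega
    rw [hsplit, Finset.sum_range_add, Finset.sum_range_add] at heval
    have hz1 : ∑ i ∈ range μ, (derivative^[s - μ] R).coeff i * α j ^ i = 0 := by
      refine Finset.sum_eq_zero fun i hi => ?_
      simp only [Finset.mem_range] at hi
      rw [hcoeffD, if_neg (by omega)]
      ring
    have hz2 : ∑ x ∈ range (s - μ),
        (derivative^[s - μ] R).coeff (μ + (P + 1) + x) * α j ^ (μ + (P + 1) + x) = 0 := by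
      refine Finset.sum_eq_zero fun x _ => ?_
      rw [hcoeffD, if_pos (by omega), hcoeffQ _ (by omega)]
      ring
    rw [hz1, hz2, zero_add, add_zero] at heval
    rw [heval]
    refine Finset.sum_congr rfl fun i _ => ?_
    have h1 : s ≤ μ + i + (s - μ) := by omega
    have h2 : μ + i + (s - μ) - s = i := by omega
    have h3 : μ + i + (s - μ) = i + s := by omega
    rw [hcoeffD, if_pos h1, h2, h3]
  -- descFactorial = factorial ratio
  have hdf : ∀ i : ℕ, ((i + s).descFactorial (s - μ) : K) = ((s + i)! : K) / ((i + μ)! : K) := by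
    intro i
    have h1 : s - μ ≤ i + s := by omega
    have h2 := Nat.factorial_mul_descFactorial h1
    have h3 : i + s - (s - μ) = i + μ := by omega
    rw [h3] at h2
    have h4 : ((i + μ)! : K) ≠ 0 := Nat.cast_ne_zero.2 (Nat.factorial_ne_zero _)
    have h2' : (i + s).descFactorial (s - μ) * (i + μ)! = (i + s)! := by
      rw [mul_comm]; exact h2
    rw [eq_div_iff h4, add_comm s i]
    exact_mod_cast congrArg (fun n : ℕ => (n : K)) h2' 
  by_cases hα : α j = 0
  · -- only i = 0 term; σ 0 = Q.eval 0 = 0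
    rw [Finset.sum_eq_single 0]
    · have : Q.coeff 0 = 0 := by
        rw [Polynomial.coeff_zero_eq_eval_zero, hQ, Polynomial.eval_prod]
        refine Finset.prod_eq_zero (Finset.mem_univ j) ?_
        simp [hα, zero_pow (by omega : l ≠ 0)]
      rw [this]; ring
    · intro i _ hi
      rw [hα, zero_pow hi]; ring
    · intro h; simp at h
  · have hαμ : α j ^ μ ≠ 0 := pow_ne_zero _ hα
    refine mul_left_cancel₀ hαμ ?_
    rw [mul_zero, Finset.mul_sum, ← hsum0]
    refine Finset.sum_congr rfl fun i _ => ?_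
    rw [hdf, pow_add]
    ring

/-- Padé approximation formula for Euler's factorial series,
as an identity of formal power series:
`B_{l,μ,0}(t)·F(α_j t) − B_{l,μ,j}(t) = S_{l,μ,j}(t)`. -/
theorem pade_euler_series {K : Type*} [Field K] [CharZero K]
    {m : ℕ} (α : Fin m → K) (l μ : ℕ) (hl : 1 ≤ l) (hμ : μ ≤ m)
    (σ : ℕ → K)
    (hσ : ∀ i, σ i = (∏ j, (C (α j) - X) ^ l).coeff i)
    (B0 : K[X])
    (hB0 : B0 = ∑ i ∈ range (m * l + 1),
        C (σ i * (((m * l + μ)! : K) / ((i + μ)! : K))) * X ^ (m * l - i))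
    (Bj : Fin m → K[X])
    (hBj : ∀ j, Bj j = C (((m * l + μ)! : ℕ) : K) *
        ∑ N ∈ range (m * l + μ),
          C (∑ h ∈ range (min (m * l) N + 1),
              σ (m * l - h) * (((N - h)! : K) / ((m * l - h + μ)! : K)) *
                (α j) ^ (N - h)) * X ^ N)
    (S : Fin m → PowerSeries K)
    (hS : ∀ j, S j = PowerSeries.mk fun N =>
        if (m + 1) * l + μ ≤ N then
          ((m * l + μ)! : K) * (l ! : K) *
            (((N - ((m + 1) * l + μ))! : ℕ) : K) *
            (((l + (N - ((m + 1) * l + μ))).choose (N - ((m + 1) * l + μ)) : ℕ) : K) *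
            (α j) ^ (l + μ + (N - ((m + 1) * l + μ))) *
            ∑ i ∈ range (m * l + 1),
              σ i * (((i + μ + l + (N - ((m + 1) * l + μ))).choose (i + μ) : ℕ) : K) *
                (α j) ^ i
        else 0)
    (j : Fin m) :
    (B0 : PowerSeries K) * (PowerSeries.mk fun n => ((n ! : ℕ) : K) * (α j) ^ n) -
        (Bj j : PowerSeries K) = S j := by
  set P := m * l with hP
  have hml : (m + 1) * l + μ = P + l + μ := by rw [hP]; ring
  have hB0c : ∀ a, B0.coeff a =
      if a ≤ P then σ (P - a) * (((P + μ)! : K) / (((P - a + μ)! : K))) else 0 := by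
    intro a
    rw [hB0, Polynomial.finset_sum_coeff]
    simp only [Polynomial.coeff_C_mul, Polynomial.coeff_X_pow, mul_ite, mul_one, mul_zero]
    by_cases ha : a ≤ P
    · rw [if_pos ha, Finset.sum_eq_single (P - a)]
      · rw [if_pos (by omega)]
      · intro i hi hne
        simp only [Finset.mem_range] at hi
        rw [if_neg (by omega)]
      · intro h
        exact absurd (Finset.mem_range.2 (by omega)) h
    · rw [if_neg ha]
      refine Finset.sum_eq_zero fun i hi => ?_
      simp only [Finset.mem_range] at hi
      rw [if_neg (by omega)]
  have hBjc : ∀ N, (PowerSeries.coeff N) ((Bj j : K[X]) : PowerSeries K) =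
      if N < P + μ then
        ((P + μ)! : K) * ∑ h ∈ range (min P N + 1),
          σ (P - h) * (((N - h)! : K) / (((P - h + μ)! : K))) * α j ^ (N - h)
      else 0 := by
    intro N
    rw [Polynomial.coeff_coe, hBj j, Polynomial.coeff_C_mul, Polynomial.finset_sum_coeff]
    simp only [Polynomial.coeff_C_mul, Polynomial.coeff_X_pow, mul_ite, mul_one, mul_zero]
    by_cases hN : N < P + μ
    · rw [if_pos hN, Finset.sum_eq_single N]
      · rw [if_pos rfl]
      · intro i hi hne
        rw [if_neg (Ne.symm hne)]
      · intro h
        exact absurd (Finset.mem_range.2 hN) h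
    · rw [if_neg hN]
      have : ∀ i ∈ range (P + μ), (if N = i then
          ∑ h ∈ range (min P i + 1),
            σ (P - h) * (((i - h)! : K) / (((P - h + μ)! : K))) * α j ^ (i - h)
          else 0) = 0 := by
        intro i hi
        simp only [Finset.mem_range] at hi
        rw [if_neg (by omega)]
      rw [Finset.sum_congr rfl this]
      simp
  have hprodc : ∀ N, (PowerSeries.coeff N)
      ((B0 : PowerSeries K) * (PowerSeries.mk fun n => ((n ! : ℕ) : K) * (α j) ^ n)) =
      ((P + μ)! : K) * ∑ h ∈ range (min P N + 1),
        σ (P - h) * (((N - h)! : K) / (((P - h + μ)! : K))) * α j ^ (N - h) := by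
    intro N
    rw [PowerSeries.coeff_mul, Finset.Nat.sum_antidiagonal_eq_sum_range_succ_mk]
    simp only [Polynomial.coeff_coe, PowerSeries.coeff_mk]
    have hz : ∀ k ∈ range (N + 1), k ∉ range (min P N + 1) →
        B0.coeff k * (((N - k)! : K) * α j ^ (N - k)) = 0 := by
      intro k hk hk'
      simp only [Finset.mem_range] at hk hk'
      rw [hB0c, if_neg (by omega), zero_mul]
    rw [← Finset.sum_subset (Finset.range_subset_range.2 (by omega : min P N + 1 ≤ N + 1)) hz]
    rw [Finset.mul_sum]
    refine Finset.sum_congr rfl fun k hk => ?_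
    simp only [Finset.mem_range] at hk
    rw [hB0c, if_pos (by omega)]
    ring
  refine PowerSeries.ext fun N => ?_
  rw [map_sub, hprodc N, hBjc N, hS j, PowerSeries.coeff_mk, hml]
  by_cases hN : N < P + μ
  · rw [if_pos hN, if_neg (by omega), sub_self]
  · rw [if_neg hN, sub_zero]
    have hPN : P ≤ N := by omega
    have hmin : min P N = P := min_eq_left hPN
    rw [hmin]
    have hre : ∑ h ∈ range (P + 1),
        σ (P - h) * (((N - h)! : K) / (((P - h + μ)! : K))) * α j ^ (N - h)
        = ∑ i ∈ range (P + 1),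
            σ i * ((((N - P) + i)! : K) / (((i + μ)! : K))) * α j ^ ((N - P) + i) := by
      rw [← Finset.sum_range_reflect
        (fun i => σ i * ((((N - P) + i)! : K) / (((i + μ)! : K))) * α j ^ ((N - P) + i)) (P + 1)]
      refine Finset.sum_congr rfl fun h hh => ?_
      simp only [Finset.mem_range] at hh
      have e1 : P + 1 - 1 - h = P - h := by omega
      have e2 : N - P + (P - h) = N - h := by omega
      rw [e1, e2]
    rw [hre]
    by_cases hN2 : N < P + l + μ
    · rw [if_neg (by omega)]
      have hk := pade_keyA α l μ hl j (N - P) (by omega) (by omega)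
      rw [← hP] at hk
      simp only [← hσ] at hk
      have hsplit : ∑ i ∈ range (P + 1),
          σ i * ((((N - P) + i)! : K) / (((i + μ)! : K))) * α j ^ ((N - P) + i)
          = α j ^ (N - P) * ∑ i ∈ range (P + 1),
              σ i * ((((N - P) + i)! : K) / (((i + μ)! : K))) * α j ^ i := by
        rw [Finset.mul_sum]
        refine Finset.sum_congr rfl fun i _ => ?_
        rw [pow_add]; ring
      rw [hsplit, hk, mul_zero, mul_zero]
    · rw [if_pos (by omega)]
      set k := N - (P + l + μ) with hkdef
      have hNP : N - P = l + μ + k := by omega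
      rw [hNP, Finset.mul_sum, Finset.mul_sum]
      refine Finset.sum_congr rfl fun i _ => ?_
      have h1 : (l + k).choose k * l ! * k ! = (l + k)! :=
        Nat.add_choose_mul_factorial_mul_factorial l k
      have h2 : (i + μ + l + k).choose (i + μ) * (i + μ)! * (l + k)! = (i + μ + l + k)! := by
        have h := Nat.choose_mul_factorial_mul_factorial (show i + μ ≤ i + μ + l + k by omega)
        simpa [show i + μ + l + k - (i + μ) = l + k by omega] using h
      have h3 : l + μ + k + i = i + μ + l + k := by omega
      have hnat : (l + μ + k + i)! =
          (i + μ + l + k).choose (i + μ) * (i + μ)! * ((l + k).choose k * l ! * k !) := by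
        rw [h3, h1, h2]
      have hK := congrArg (fun n : ℕ => (n : K)) hnat
      push_cast at hK
      have hne : ((i + μ)! : K) ≠ 0 := Nat.cast_ne_zero.2 (Nat.factorial_ne_zero _)
      rw [hK]
      field_simp
      ring
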